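/- Let A ∈ ℝ^{k×k} be positive semidefinite and B ∈ ℝ^{k×k} be positive definite with generalized eigenvalues λ_1 ≥ ... ≥ λ_k (i.e. eigenvalues of B^{-1/2}AB^{-1/2}). Then for every W ∈ ℝ^{k×k}, trace(WᵀAW(2I_k − WᵀBW)) ≤ λ_1 + ... + λ_k, and equality holds whenever W satisfies WᵀBW = I_k. -/

import Mathlib

open Matrix

/-- Key computation: for any square C and diagonal Λ with nonneg entries. -/
lemma stmt7_key (k : ℕ) (lam : Fin k → ℝ) (hlam : ∀ j, 0 ≤ lam j)
    (C : Matrix (Fin k) (Fin k) ℝ) :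
    (Cᵀ * Matrix.diagonal lam * C * (2 - Cᵀ * C)).trace
      = (∑ j : Fin k, lam j)
        - (Matrix.diagonal lam * (1 - C * Cᵀ) * (1 - C * Cᵀ)).trace ∧
    0 ≤ (Matrix.diagonal lam * (1 - C * Cᵀ) * (1 - C * Cᵀ)).trace := by
  set Λ := Matrix.diagonal lam with hΛ
  set P := C * Cᵀ with hP
  constructor
  · have e1 : (Cᵀ * Λ * C).trace = (Λ * P).trace := by
      rw [hP, ← mul_assoc Λ C Cᵀ, mul_assoc Cᵀ Λ C, Matrix.trace_mul_comm]
    have e2 : (Cᵀ * Λ * C * (Cᵀ * C)).trace = (Λ * P * P).trace := by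
      rw [show Cᵀ * Λ * C * (Cᵀ * C) = Cᵀ * (Λ * C * Cᵀ * C) from by noncomm_ring,
        Matrix.trace_mul_comm,
        show Λ * C * Cᵀ * C * Cᵀ = Λ * (C * Cᵀ) * (C * Cᵀ) from by noncomm_ring, ← hP]
    have h1 : (Cᵀ * Λ * C * (2 - Cᵀ * C)).trace
        = 2 * (Λ * P).trace - (Λ * P * P).trace := by
      rw [mul_sub, trace_sub,
        show Cᵀ * Λ * C * 2 = Cᵀ * Λ * C + Cᵀ * Λ * C from by noncomm_ring,
        trace_add, e1, e2]
      ring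
    have h2 : (Λ * (1 - P) * (1 - P)).trace
        = Λ.trace - (2 * (Λ * P).trace - (Λ * P * P).trace) := by
      have : Λ * (1 - P) * (1 - P) = Λ - Λ * P - (Λ * P - Λ * P * P) := by noncomm_ring
      rw [this, trace_sub, trace_sub, trace_sub]
      ring
    rw [h1, h2, hΛ, Matrix.trace_diagonal]
    ring
  · have hPsymm : Pᵀ = P := by rw [hP, Matrix.transpose_mul, Matrix.transpose_transpose]
    have hQsymm : (1 - P)ᵀ = 1 - P := by
      rw [Matrix.transpose_sub, Matrix.transpose_one, hPsymm]
    rw [Matrix.trace]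
    apply Finset.sum_nonneg
    intro i _
    have : (Λ * (1 - P) * (1 - P)) i i
        = lam i * ∑ j, ((1 - P) i j)^2 := by
      rw [hΛ, mul_assoc, Matrix.diagonal_mul, Matrix.mul_apply]
      congr 1
      refine Finset.sum_congr rfl fun j _ => ?_
      have hji : (1 - P) j i = (1 - P) i j := by
        conv_lhs => rw [← hQsymm]
        rfl
      rw [hji]; ring
    rw [Matrix.diag_apply, this]
    exact mul_nonneg (hlam i) (Finset.sum_nonneg fun j _ => sq_nonneg _)

theorem stmt7 (k : ℕ) (A B : Matrix (Fin k) (Fin k) ℝ)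
    (hA : A.PosSemidef) (hB : B.PosDef)
    (lam : Fin k → ℝ) (w : Fin k → Fin k → ℝ)
    (horth : ∀ j l : Fin k, w j ⬝ᵥ B.mulVec (w l) = if j = l then 1 else 0)
    (heig : ∀ j : Fin k, A.mulVec (w j) = lam j • B.mulVec (w j))
    (hdec : ∀ j l : Fin k, j ≤ l → lam l ≤ lam j) :
    (∀ W : Matrix (Fin k) (Fin k) ℝ,
        (Wᵀ * A * W * (2 - Wᵀ * B * W)).trace ≤ ∑ j : Fin k, lam j) ∧
    (∀ W : Matrix (Fin k) (Fin k) ℝ, Wᵀ * B * W = 1 →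
        (Wᵀ * A * W * (2 - Wᵀ * B * W)).trace = ∑ j : Fin k, lam j) := by
  classical
  set M : Matrix (Fin k) (Fin k) ℝ := Matrix.of (fun i j => w j i) with hM
  -- orthonormality in matrix form
  have hMBM : Mᵀ * B * M = 1 := by
    ext j l
    simp only [Matrix.mul_apply, Matrix.transpose_apply, hM, Matrix.of_apply,
      Matrix.one_apply]
    rw [← horth j l]
    simp only [dotProduct, Matrix.mulVec, dotProduct, Finset.mul_sum, Finset.sum_mul]
    rw [Finset.sum_comm]
    exact Finset.sum_congr rfl fun x _ => Finset.sum_congr rfl fun y _ => by ring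
  -- eigen relation in matrix form
  have hAM : A * M = B * M * Matrix.diagonal lam := by
    ext i j
    have h := congrFun (heig j) i
    simp only [Matrix.mulVec, dotProduct, Pi.smul_apply, smul_eq_mul] at h
    simp only [Matrix.mul_apply, hM, Matrix.of_apply, Matrix.diagonal_apply, mul_ite,
      mul_zero, Finset.sum_ite_eq', Finset.mem_univ, if_true]
    rw [h, Finset.mul_sum]
    rw [Finset.sum_mul]
    exact Finset.sum_congr rfl fun x _ => by ring
  have hMAM : Mᵀ * A * M = Matrix.diagonal lam := by
    calc Mᵀ * A * M = Mᵀ * (A * M) := by rw [mul_assoc]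
    _ = Mᵀ * (B * M * Matrix.diagonal lam) := by rw [hAM]
    _ = (Mᵀ * B * M) * Matrix.diagonal lam := by noncomm_ring
    _ = Matrix.diagonal lam := by rw [hMBM, one_mul]
  -- M is invertible
  have h2 : M * (Mᵀ * B) = 1 := mul_eq_one_comm.mp hMBM
  have hMdet : IsUnit M.det :=
    IsUnit.of_mul_eq_one (Mᵀ * B).det (by rw [← Matrix.det_mul, h2, Matrix.det_one])
  have hMinv : M * M⁻¹ = 1 := Matrix.mul_nonsing_inv M hMdet
  -- nonnegativity of eigenvalues
  have hlam : ∀ j, 0 ≤ lam j := by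
    intro j
    have h0 := hA.dotProduct_mulVec_nonneg (w j)
    have h1 : w j ⬝ᵥ A.mulVec (w j) = lam j := by
      rw [heig j, dotProduct_smul, smul_eq_mul, horth j j, if_pos rfl, mul_one]
    simpa [h1] using h0
  -- main bound for arbitrary W
  have main : ∀ W : Matrix (Fin k) (Fin k) ℝ,
      (Wᵀ * A * W * (2 - Wᵀ * B * W)).trace
        = (∑ j : Fin k, lam j)
          - (Matrix.diagonal lam * (1 - (M⁻¹ * W) * (M⁻¹ * W)ᵀ)
              * (1 - (M⁻¹ * W) * (M⁻¹ * W)ᵀ)).trace := by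
    intro W
    set C := M⁻¹ * W with hC
    have hW : W = M * C := by rw [hC, ← mul_assoc, hMinv, one_mul]
    have hWA : Wᵀ * A * W = Cᵀ * Matrix.diagonal lam * C := by
      rw [hW, Matrix.transpose_mul]
      calc Cᵀ * Mᵀ * A * (M * C) = Cᵀ * (Mᵀ * A * M) * C := by noncomm_ring
      _ = Cᵀ * Matrix.diagonal lam * C := by rw [hMAM]
    have hWB : Wᵀ * B * W = Cᵀ * C := by
      rw [hW, Matrix.transpose_mul]
      calc Cᵀ * Mᵀ * B * (M * C) = Cᵀ * (Mᵀ * B * M) * C := by noncomm_ring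
      _ = Cᵀ * C := by rw [hMBM, mul_one]
    rw [hWA, hWB]
    exact (stmt7_key k lam hlam C).1
  constructor
  · intro W
    rw [main W]
    have := (stmt7_key k lam hlam (M⁻¹ * W)).2
    linarith
  · intro W hWB1
    rw [main W]
    set C := M⁻¹ * W with hC
    have hW : W = M * C := by rw [hC, ← mul_assoc, hMinv, one_mul]
    have hCtC : Cᵀ * C = 1 := by
      have e : (M * C)ᵀ * B * (M * C) = 1 := by rw [← hW]; exact hWB1
      rw [Matrix.transpose_mul] at e
      calc Cᵀ * C = Cᵀ * (Mᵀ * B * M) * C := by rw [hMBM, mul_one]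
      _ = Cᵀ * Mᵀ * B * (M * C) := by noncomm_ring
      _ = 1 := e
    have hCCt : C * Cᵀ = 1 := mul_eq_one_comm.mp hCtC
    rw [hCCt]
    simp
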